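/- In an adapted chart where the Camacho-Sad action along X_f on the normal bundle of a smooth hypersurface S is written X̃_f(∂_1)(∂_1^{⊗ν_f}) = M_f ∂_1, one has M_f = −(∂g^1/∂z^1)|_S; and if f is tangential, writing g^1 = z^1 h^1, one has M_f = −h^1|_S. -/

import Mathlib

open Filter Topology

abbrev Esp (n : ℕ) := Fin n → ℂ

/-- The Lie bracket of two (holomorphic) vector fields on `ℂ^n`. -/
noncomputable def lieB {n : ℕ} (V W : Esp n → Esp n) (x : Esp n) : Esp n :=
  fderiv ℂ W x (V x) - fderiv ℂ V x (W x)

/-!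
STATEMENT 12.  `S` is the smooth hypersurface `{z^1 = 0}` (the coordinate `z^1` being
`x 0`) in the adapted chart `U`, pointwise fixed by the tangential map `f ≢ id` with
`f^j − z^j = g^j·(z^1)^{ν_f}` (`hfg`) and `g^1 = z^1·h^1` (`htang`).  The Camacho–Sad
action is `X̃_f(s)(u) = π([𝒳_f(ũ), s̃]|_S)`, with `𝒳_f = ∑_j g^j ∂/∂z^j ⊗ (dz^1)^{⊗ν_f}`;
evaluating it on the frames `∂_1`, `∂_1^{⊗ν_f}` gives `X̃_f(∂_1)(∂_1^{⊗ν_f}) = M_f·∂_1`,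
where `M_f` is the `N_S`-component (the `0`-th component) of the bracket
`[∑_j g^j ∂/∂z^j, ∂/∂z^1]` restricted to `S`.  Conclusion: on `S ∩ U`,
`M_f = −(∂g^1/∂z^1)|_S`, and (by tangentiality) `M_f = −h^1|_S`.
-/
theorem statement_12 {n : ℕ} [NeZero n] (hn : 2 ≤ n) (ν : ℕ) (hν : 1 ≤ ν)
    (U : Set (Esp n)) (hU : IsOpen U)
    (f : Esp n → Esp n) (hfa : AnalyticOnNhd ℂ f U)
    (hfix : ∀ x ∈ U, x 0 = 0 → f x = x)
    (g : Fin n → Esp n → ℂ) (h : Esp n → ℂ)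
    (hga : ∀ j, AnalyticOnNhd ℂ (g j) U) (hha : AnalyticOnNhd ℂ h U)
    (hfg : ∀ x ∈ U, ∀ j : Fin n, f x j - x j = g j x * (x 0) ^ ν)
    (htang : ∀ x ∈ U, g 0 x = x 0 * h x) :
    ∀ x ∈ U, x 0 = 0 →
      (lieB (fun y => fun j => g j y) (fun _ => Pi.single (0 : Fin n) 1) x) 0 =
          -(fderiv ℂ (g 0) x) (Pi.single (0 : Fin n) 1) ∧
      (lieB (fun y => fun j => g j y) (fun _ => Pi.single (0 : Fin n) 1) x) 0 = -h x := by
  intro x hx hx0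
  have hdg : ∀ j, DifferentiableAt ℂ (g j) x := fun j => (hga j x hx).differentiableAt
  have h1 : (lieB (fun y => fun j => g j y) (fun _ => Pi.single (0 : Fin n) 1) x) 0 =
      -(fderiv ℂ (g 0) x) (Pi.single (0 : Fin n) 1) := by
    unfold lieB
    rw [fderiv_fun_const]
    simp only [ContinuousLinearMap.zero_apply, Pi.zero_apply, zero_sub, Pi.neg_apply,
      Pi.sub_apply]
    rw [fderiv_pi (fun j => hdg j)]
    simp
  refine ⟨h1, ?_⟩
  rw [h1]
  have heq : g 0 =ᶠ[𝓝 x] fun y => y 0 * h y :=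
    eventually_of_mem (hU.mem_nhds hx) (fun y hy => htang y hy)
  rw [heq.fderiv_eq]
  have hproj : DifferentiableAt ℂ (fun y : Esp n => y 0) x :=
    (ContinuousLinearMap.proj (R := ℂ) (φ := fun _ : Fin n => ℂ) 0).differentiableAt
  rw [fderiv_fun_mul hproj (hha x hx).differentiableAt]
  have : fderiv ℂ (fun y : Esp n => y 0) x =
      ContinuousLinearMap.proj (R := ℂ) (φ := fun _ : Fin n => ℂ) 0 :=
    (ContinuousLinearMap.proj (R := ℂ) (φ := fun _ : Fin n => ℂ) 0).fderiv
  simp [this, hx0]
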